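/- arXiv:1408.2951 — 4 statements merged into one kernel-verified Lean document; each statement's English description precedes it below -/
import Mathlib

section
/- Let n, m be integers with m ≥ 1 and n − m ≥ 2, and let ε > 0. Define f : ℝ^{n×m} → ℝ by f(M) = det(MᵀM + εI_m)^{−(n−m−1)/2}. Then Δf(M) < 0 for every M ∈ ℝ^{n×m}; that is, f is strictly superharmonic on ℝ^{nm}. -/
open Matrix

section AuxLemmas


lemma poly_hasDerivAt (β c : ℝ) (t : ℝ) :
    HasDerivAt (fun t : ℝ => 1 + 2*β*t + c*t^2) (2*β + 2*c*t) t := by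
  have h1 : HasDerivAt (fun t : ℝ => t) 1 t := hasDerivAt_id t
  have h2 : HasDerivAt (fun t : ℝ => t^2) (2*t) t := by simpa using hasDerivAt_pow 2 t
  have := ((h1.const_mul (2*β)).const_add 1).add (h2.const_mul c)
  exact this.congr_deriv (by ring)

lemma calc2 (D β c q : ℝ) (hD : 0 < D)
    (hpos : ∀ t : ℝ, 0 < D * (1 + 2*β*t + c*t^2)) :
    iteratedDeriv 2 (fun t : ℝ => (D * (1 + 2*β*t + c*t^2)) ^ q) 0
      = D ^ q * (4*q*(q-1)*β^2 + 2*q*c) := by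
  set g : ℝ → ℝ := fun t => D * (1 + 2*β*t + c*t^2) with hg_def
  have hg : ∀ t, HasDerivAt g (D * (2*β + 2*c*t)) t := fun t => (poly_hasDerivAt β c t).const_mul D
  have hf : ∀ t, HasDerivAt (fun t => g t ^ q) (D * (2*β + 2*c*t) * q * g t ^ (q-1)) t :=
    fun t => (hg t).rpow_const (Or.inl (hpos t).ne')
  have hderiv : deriv (fun t => g t ^ q) = fun t => D * (2*β + 2*c*t) * q * g t ^ (q-1) :=
    funext fun t => (hf t).deriv
  have h2 : HasDerivAt (fun t => D * (2*β + 2*c*t) * q * g t ^ (q-1))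
      ((D * (2*c)) * q * g 0 ^ (q-1)
        + D * (2*β + 2*c*0) * q * (D * (2*β + 2*c*0) * (q-1) * g 0 ^ (q-1-1))) 0 := by
    have ha : HasDerivAt (fun t => g t ^ (q-1))
        (D * (2*β + 2*c*0) * (q-1) * g 0 ^ (q-1-1)) 0 :=
      (hg 0).rpow_const (Or.inl (hpos 0).ne')
    have hb : HasDerivAt (fun t : ℝ => D * (2*β + 2*c*t) * q) (D * (2*c) * q) 0 := by
      have : HasDerivAt (fun t : ℝ => 2*β + 2*c*t) (2*c) 0 := by
        simpa using ((hasDerivAt_id (0:ℝ)).const_mul (2*c)).const_add (2*β)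
      exact (this.const_mul D).mul_const q
    exact hb.mul ha
  have key : iteratedDeriv 2 (fun t => g t ^ q) 0 = deriv (deriv fun t => g t ^ q) 0 := by
    rw [iteratedDeriv_succ, iteratedDeriv_one]
  rw [key, hderiv, h2.deriv]
  have hg0 : g 0 = D := by simp [hg_def]
  rw [hg0]
  have e1 : D ^ (q-1-1) = D ^ q / D^2 := by
    rw [show q-1-1 = q - 2 by ring, Real.rpow_sub hD, Real.rpow_two]
  have e2 : D ^ (q-1) = D ^ q / D := by
    rw [Real.rpow_sub hD, Real.rpow_one]
  rw [e1, e2]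
  field_simp
  ring

variable {n m : ℕ}

lemma step_matrix (ε : ℝ) (M : Matrix (Fin n) (Fin m) ℝ) (i : Fin n) (a : Fin m) (t : ℝ) :
    (M + t • single i a 1)ᵀ * (M + t • single i a 1)
        + ε • (1 : Matrix (Fin m) (Fin m) ℝ)
      = (Mᵀ * M + ε • (1 : Matrix (Fin m) (Fin m) ℝ))
        + (Matrix.of fun k (j : Fin 2) => ![M i k, if a = k then (1:ℝ) else 0] j)
          * (Matrix.of fun (j : Fin 2) l =>
              ![fun l => t * (if a = l then (1:ℝ) else 0),
                fun l => t * M i l + t^2 * (if a = l then (1:ℝ) else 0)] j l) := by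
  ext k l
  simp only [Matrix.add_apply, Matrix.mul_apply, Matrix.transpose_apply, Matrix.smul_apply,
    smul_eq_mul, Matrix.single, Matrix.of_apply, Fin.sum_univ_two,
    Matrix.cons_val_zero, Matrix.cons_val_one, Matrix.head_cons]
  simp only [add_mul, mul_add, Finset.sum_add_distrib, ite_and, mul_ite, ite_mul,
    mul_zero, zero_mul, mul_one, one_mul, Finset.sum_ite_eq, Finset.sum_ite_eq',
    Finset.mem_univ, if_true]
  split_ifs <;> ring

lemma det_identity (ε : ℝ) (M : Matrix (Fin n) (Fin m) ℝ) (i : Fin n) (a : Fin m)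
    (hdet : IsUnit (Mᵀ * M + ε • (1 : Matrix (Fin m) (Fin m) ℝ)).det)
    (hsym : ∀ k l, (Mᵀ * M + ε • (1 : Matrix (Fin m) (Fin m) ℝ))⁻¹ k l
      = (Mᵀ * M + ε • (1 : Matrix (Fin m) (Fin m) ℝ))⁻¹ l k) (t : ℝ) :
    ((M + t • single i a 1)ᵀ * (M + t • single i a 1)
        + ε • (1 : Matrix (Fin m) (Fin m) ℝ)).det
      = (Mᵀ * M + ε • (1 : Matrix (Fin m) (Fin m) ℝ)).det *
        (1 + 2 * (∑ k, (Mᵀ * M + ε • (1 : Matrix (Fin m) (Fin m) ℝ))⁻¹ a k * M i k) * t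
          + ((∑ k, (Mᵀ * M + ε • (1 : Matrix (Fin m) (Fin m) ℝ))⁻¹ a k * M i k)^2
              + (Mᵀ * M + ε • (1 : Matrix (Fin m) (Fin m) ℝ))⁻¹ a a
              - (∑ l, ∑ k, M i l * ((Mᵀ * M + ε • (1 : Matrix (Fin m) (Fin m) ℝ))⁻¹ l k * M i k))
                * (Mᵀ * M + ε • (1 : Matrix (Fin m) (Fin m) ℝ))⁻¹ a a) * t^2) := by
  set A : Matrix (Fin m) (Fin m) ℝ := Mᵀ * M + ε • 1 with hA_def
  set S : Matrix (Fin m) (Fin m) ℝ := A⁻¹ with hS_def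
  set β : ℝ := ∑ k, S a k * M i k with hβ_def
  set γ : ℝ := S a a with hγ_def
  set α : ℝ := ∑ l, ∑ k, M i l * (S l k * M i k) with hα_def
  set P : Matrix (Fin m) (Fin 2) ℝ :=
    Matrix.of fun k (j : Fin 2) => ![M i k, if a = k then (1:ℝ) else 0] j with hP_def
  set Q : Matrix (Fin 2) (Fin m) ℝ :=
    Matrix.of fun (j : Fin 2) l =>
      ![fun l => t * (if a = l then (1:ℝ) else 0),
        fun l => t * M i l + t^2 * (if a = l then (1:ℝ) else 0)] j l with hQ_def
  have hstep := step_matrix (n := n) (m := m) ε M i a t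
  rw [hstep]
  have h1 : A + P * Q = A * (1 + S * (P * Q)) := by
    rw [mul_add, mul_one, ← Matrix.mul_assoc, Matrix.mul_nonsing_inv _ hdet, Matrix.one_mul]
  rw [h1, det_mul, ← Matrix.mul_assoc, Matrix.det_one_add_mul_comm]
  congr 1
  have hSP : S * P = Matrix.of fun l (j : Fin 2) => ![∑ k, S l k * M i k, S l a] j := by
    ext l j
    fin_cases j <;>
      simp [Matrix.mul_apply, mul_ite, mul_one, mul_zero, Finset.sum_ite_eq, hP_def]
  have h2x2 : (1 : Matrix (Fin 2) (Fin 2) ℝ) + Q * (S * P)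
      = !![1 + t * β, t * γ; t * α + t^2 * β, 1 + t * β + t^2 * γ] := by
    rw [hSP]
    ext j j'
    fin_cases j <;> fin_cases j' <;>
      simp [Matrix.mul_apply, Matrix.one_apply, hQ_def, add_mul, Finset.sum_add_distrib,
        ite_mul, zero_mul, Finset.sum_ite_eq, Finset.mul_sum, hβ_def, hα_def, hγ_def,
        mul_assoc]
    have hx : ∀ x, M i x * S x a = S a x * M i x := fun x => by rw [hsym x a]; ring
    simp only [hx]
    ring
  rw [h2x2, Matrix.det_fin_two_of]
  ring

lemma posdef_aux {n m : ℕ} (ε : ℝ) (hε : 0 < ε) (hm : 1 ≤ m) (N : Matrix (Fin n) (Fin m) ℝ) :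
    (Nᵀ * N + ε • (1 : Matrix (Fin m) (Fin m) ℝ)).PosDef := by
  haveI : NeZero m := ⟨by omega⟩
  have h1 : (Nᵀ * N).PosSemidef := by
    have := Matrix.posSemidef_conjTranspose_mul_self N
    convert this using 2
    exact (Matrix.conjTranspose_eq_transpose_of_trivial N).symm
  have h2 : (ε • (1 : Matrix (Fin m) (Fin m) ℝ)).PosDef := by
    rw [Matrix.smul_one_eq_diagonal]
    exact Matrix.posDef_diagonal_iff.mpr fun _ => hε
  exact Matrix.PosDef.posSemidef_add h1 h2



lemma sum_lemma {n m : ℕ} (ε : ℝ) (M : Matrix (Fin n) (Fin m) ℝ)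
    (S : Matrix (Fin m) (Fin m) ℝ)
    (hkey : ∀ a b, (∑ x, (∑ k, S a k * M x k) * M x b)
      = (if a = b then (1:ℝ) else 0) - ε * S a b) :
    (∑ i, ∑ a, (∑ k, S a k * M i k)^2
        = (∑ a, S a a) - ε * ∑ a, ∑ k, S a k * S a k)
    ∧ (∑ i, ∑ l, ∑ k, M i l * (S l k * M i k) = (m : ℝ) - ε * ∑ a, S a a) := by
  constructor
  · rw [Finset.sum_comm]
    have key : ∀ a, ∑ i, (∑ k, S a k * M i k)^2 = S a a - ε * ∑ k, S a k * S a k := by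
      intro a
      calc ∑ i, (∑ k, S a k * M i k)^2
          = ∑ i, ∑ k, S a k * ((∑ k', S a k' * M i k') * M i k) := by
            refine Finset.sum_congr rfl fun i _ => ?_
            rw [pow_two, Finset.sum_mul]
            exact Finset.sum_congr rfl fun k _ => by ring
        _ = ∑ k, ∑ i, S a k * ((∑ k', S a k' * M i k') * M i k) := Finset.sum_comm
        _ = ∑ k, S a k * ((if a = k then (1:ℝ) else 0) - ε * S a k) := by
            refine Finset.sum_congr rfl fun k _ => ?_
            rw [← Finset.mul_sum, hkey a k]
        _ = S a a - ε * ∑ k, S a k * S a k := by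
            simp only [mul_sub, mul_ite, mul_one, mul_zero, Finset.sum_sub_distrib,
              Finset.sum_ite_eq, Finset.mem_univ, if_true, Finset.mul_sum]
            congr 1
            exact Finset.sum_congr rfl fun k _ => by ring
    rw [Finset.sum_congr rfl fun a _ => key a, Finset.sum_sub_distrib, ← Finset.mul_sum]
  · calc ∑ i, ∑ l, ∑ k, M i l * (S l k * M i k)
        = ∑ l, ∑ i, (∑ k, S l k * M i k) * M i l := by
          rw [Finset.sum_comm]
          refine Finset.sum_congr rfl fun l _ => Finset.sum_congr rfl fun i _ => ?_
          rw [Finset.sum_mul]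
          exact Finset.sum_congr rfl fun k _ => by ring
      _ = ∑ l : Fin m, ((1:ℝ) - ε * S l l) := by
          refine Finset.sum_congr rfl fun l _ => ?_
          rw [hkey l l, if_pos rfl]
      _ = (m : ℝ) - ε * ∑ a, S a a := by
          rw [Finset.sum_sub_distrib, ← Finset.mul_sum]
          simp [Finset.card_univ]

end AuxLemmas

/-- The second partial derivative of `f` with respect to the `(i,a)` entry, at `M`. -/
noncomputable def matSecondPartial {n m : ℕ} (f : Matrix (Fin n) (Fin m) ℝ → ℝ)
    (M : Matrix (Fin n) (Fin m) ℝ) (i : Fin n) (a : Fin m) : ℝ :=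
  iteratedDeriv 2 (fun t : ℝ => f (M + t • Matrix.single i a 1)) 0

/-- The Laplacian of `f : ℝ^{n×m} → ℝ`, i.e. the sum of all second partial derivatives
with respect to the entries. -/
noncomputable def matLaplacian {n m : ℕ} (f : Matrix (Fin n) (Fin m) ℝ → ℝ)
    (M : Matrix (Fin n) (Fin m) ℝ) : ℝ :=
  ∑ i : Fin n, ∑ a : Fin m, matSecondPartial f M i a

lemma second_partial_eq {n m : ℕ} (ε : ℝ) (hε : 0 < ε) (hm : 1 ≤ m) (q : ℝ)
    (M : Matrix (Fin n) (Fin m) ℝ) (i : Fin n) (a : Fin m)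
    (hdet : IsUnit (Mᵀ * M + ε • (1 : Matrix (Fin m) (Fin m) ℝ)).det)
    (hsym : ∀ k l, (Mᵀ * M + ε • (1 : Matrix (Fin m) (Fin m) ℝ))⁻¹ k l
      = (Mᵀ * M + ε • (1 : Matrix (Fin m) (Fin m) ℝ))⁻¹ l k) :
    matSecondPartial
        (fun M0 => ((M0ᵀ * M0 + ε • (1 : Matrix (Fin m) (Fin m) ℝ)).det) ^ q) M i a
      = (Mᵀ * M + ε • (1 : Matrix (Fin m) (Fin m) ℝ)).det ^ q *
        (4*q*(q-1)*(∑ k, (Mᵀ * M + ε • (1 : Matrix (Fin m) (Fin m) ℝ))⁻¹ a k * M i k)^2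
          + 2*q*((∑ k, (Mᵀ * M + ε • (1 : Matrix (Fin m) (Fin m) ℝ))⁻¹ a k * M i k)^2
              + (Mᵀ * M + ε • (1 : Matrix (Fin m) (Fin m) ℝ))⁻¹ a a
              - (∑ l, ∑ k, M i l * ((Mᵀ * M + ε • (1 : Matrix (Fin m) (Fin m) ℝ))⁻¹ l k * M i k))
                * (Mᵀ * M + ε • (1 : Matrix (Fin m) (Fin m) ℝ))⁻¹ a a)) := by
  have hD : 0 < (Mᵀ * M + ε • (1 : Matrix (Fin m) (Fin m) ℝ)).det :=
    (posdef_aux ε hε hm M).det_pos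
  have hpos : ∀ t : ℝ, 0 < (Mᵀ * M + ε • (1 : Matrix (Fin m) (Fin m) ℝ)).det *
      (1 + 2 * (∑ k, (Mᵀ * M + ε • (1 : Matrix (Fin m) (Fin m) ℝ))⁻¹ a k * M i k) * t
        + ((∑ k, (Mᵀ * M + ε • (1 : Matrix (Fin m) (Fin m) ℝ))⁻¹ a k * M i k)^2
            + (Mᵀ * M + ε • (1 : Matrix (Fin m) (Fin m) ℝ))⁻¹ a a
            - (∑ l, ∑ k, M i l * ((Mᵀ * M + ε • (1 : Matrix (Fin m) (Fin m) ℝ))⁻¹ l k * M i k))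
              * (Mᵀ * M + ε • (1 : Matrix (Fin m) (Fin m) ℝ))⁻¹ a a) * t^2) := by
    intro t
    rw [← det_identity ε M i a hdet hsym t]
    exact (posdef_aux ε hε hm _).det_pos
  unfold matSecondPartial
  have hfun : (fun t : ℝ =>
      (fun M0 : Matrix (Fin n) (Fin m) ℝ =>
        ((M0ᵀ * M0 + ε • (1 : Matrix (Fin m) (Fin m) ℝ)).det) ^ q)
        (M + t • Matrix.single i a 1))
      = fun t : ℝ => ((Mᵀ * M + ε • (1 : Matrix (Fin m) (Fin m) ℝ)).det *
        (1 + 2 * (∑ k, (Mᵀ * M + ε • (1 : Matrix (Fin m) (Fin m) ℝ))⁻¹ a k * M i k) * t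
          + ((∑ k, (Mᵀ * M + ε • (1 : Matrix (Fin m) (Fin m) ℝ))⁻¹ a k * M i k)^2
              + (Mᵀ * M + ε • (1 : Matrix (Fin m) (Fin m) ℝ))⁻¹ a a
              - (∑ l, ∑ k, M i l * ((Mᵀ * M + ε • (1 : Matrix (Fin m) (Fin m) ℝ))⁻¹ l k * M i k))
                * (Mᵀ * M + ε • (1 : Matrix (Fin m) (Fin m) ℝ))⁻¹ a a) * t^2)) ^ q := by
    funext t
    beta_reduce
    rw [det_identity ε M i a hdet hsym t]
  rw [hfun, calc2 _ _ _ q hD hpos]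

theorem stmt1 (n m : ℕ) (hm : 1 ≤ m) (hnm : m + 2 ≤ n) (ε : ℝ) (hε : 0 < ε)
    (f : Matrix (Fin n) (Fin m) ℝ → ℝ)
    (hf : f = fun M => ((Mᵀ * M + ε • (1 : Matrix (Fin m) (Fin m) ℝ)).det)
      ^ (-(((n : ℝ) - m - 1)) / 2)) :
    ∀ M : Matrix (Fin n) (Fin m) ℝ, matLaplacian f M < 0 := by
  subst hf
  intro M
  haveI : Nonempty (Fin m) := ⟨⟨0, hm⟩⟩
  have hApos : (Mᵀ * M + ε • (1 : Matrix (Fin m) (Fin m) ℝ)).PosDef := posdef_aux ε hε hm M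
  have hD : 0 < (Mᵀ * M + ε • (1 : Matrix (Fin m) (Fin m) ℝ)).det := hApos.det_pos
  have hdet : IsUnit (Mᵀ * M + ε • (1 : Matrix (Fin m) (Fin m) ℝ)).det := hD.ne'.isUnit
  have hSpos : ((Mᵀ * M + ε • (1 : Matrix (Fin m) (Fin m) ℝ))⁻¹).PosDef := hApos.inv
  have hsym : ∀ k l, (Mᵀ * M + ε • (1 : Matrix (Fin m) (Fin m) ℝ))⁻¹ k l
      = (Mᵀ * M + ε • (1 : Matrix (Fin m) (Fin m) ℝ))⁻¹ l k := by
    intro k l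
    conv_lhs => rw [← hSpos.isHermitian]
    simp [Matrix.conjTranspose_apply]
  set S : Matrix (Fin m) (Fin m) ℝ := (Mᵀ * M + ε • (1 : Matrix (Fin m) (Fin m) ℝ))⁻¹
    with hS_def
  -- key entry identity from S * A = 1
  have hkey : ∀ a b : Fin m, (∑ x, (∑ k, S a k * M x k) * M x b)
      = (if a = b then (1:ℝ) else 0) - ε * S a b := by
    intro a b
    have h := Matrix.nonsing_inv_mul _ hdet
    have h2 := congrFun (congrFun h a) b
    rw [← hS_def] at h2
    simp only [Matrix.mul_apply, Matrix.add_apply, Matrix.smul_apply, Matrix.one_apply,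
      Matrix.transpose_apply, smul_eq_mul, mul_add, Finset.sum_add_distrib, mul_ite, mul_one,
      mul_zero, Finset.sum_ite_eq', Finset.mem_univ, if_true] at h2
    have swap : (∑ x, (∑ k, S a k * M x k) * M x b)
        = ∑ k, S a k * (∑ x, M x k * M x b) := by
      simp only [Finset.sum_mul, Finset.mul_sum]
      rw [Finset.sum_comm]
      exact Finset.sum_congr rfl fun k _ => Finset.sum_congr rfl fun x _ => by ring
    rw [swap]
    by_cases hab : a = b
    · subst hab
      rw [if_pos rfl]
      rw [if_pos rfl] at h2
      linarith
    · rw [if_neg hab]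
      rw [if_neg hab] at h2
      linarith
  obtain ⟨hB, hAL⟩ := sum_lemma ε M S hkey
  -- diagonal entries of S are positive
  have hdiag : ∀ b, 0 < S b b := by
    intro b
    have hx : (Pi.single b 1 : Fin m → ℝ) ≠ 0 := by
      intro h
      have h1 := congrFun h b
      simp [Pi.single_apply] at h1
    have h0 := hSpos.dotProduct_mulVec_pos hx
    simpa [dotProduct, Matrix.mulVec, Pi.single_apply, mul_ite, ite_mul, mul_one,
      mul_zero, zero_mul, one_mul, Finset.sum_ite_eq, Finset.sum_ite_eq'] using h0
  set T : ℝ := ∑ a, S a a with hT_def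
  set U : ℝ := ∑ a, ∑ k, S a k * S a k with hU_def
  have hT : 0 < T := Finset.sum_pos (fun b _ => hdiag b) Finset.univ_nonempty
  have hU : 0 < U := by
    refine Finset.sum_pos' (fun a _ => Finset.sum_nonneg fun k _ => mul_self_nonneg _)
      ⟨⟨0, hm⟩, Finset.mem_univ _, ?_⟩
    refine Finset.sum_pos' (fun k _ => mul_self_nonneg _)
      ⟨⟨0, hm⟩, Finset.mem_univ _, mul_pos (hdiag _) (hdiag _)⟩
  set q : ℝ := -(((n : ℝ) - m - 1)) / 2 with hq_def
  -- rewrite the Laplacian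
  have step0 : matLaplacian
      (fun M0 : Matrix (Fin n) (Fin m) ℝ =>
        ((M0ᵀ * M0 + ε • (1 : Matrix (Fin m) (Fin m) ℝ)).det) ^ q) M
      = ∑ i, ∑ a, (Mᵀ * M + ε • (1 : Matrix (Fin m) (Fin m) ℝ)).det ^ q *
        (4*q*(q-1)*(∑ k, S a k * M i k)^2
          + 2*q*((∑ k, S a k * M i k)^2 + S a a
              - (∑ l, ∑ k, M i l * (S l k * M i k)) * S a a)) := by
    unfold matLaplacian
    exact Finset.sum_congr rfl fun i _ => Finset.sum_congr rfl fun a _ =>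
      second_partial_eq ε hε hm q M i a hdet hsym
  have step1 : ∑ i, ∑ a, (Mᵀ * M + ε • (1 : Matrix (Fin m) (Fin m) ℝ)).det ^ q *
        (4*q*(q-1)*(∑ k, S a k * M i k)^2
          + 2*q*((∑ k, S a k * M i k)^2 + S a a
              - (∑ l, ∑ k, M i l * (S l k * M i k)) * S a a))
      = (Mᵀ * M + ε • (1 : Matrix (Fin m) (Fin m) ℝ)).det ^ q *
        ((4*q*(q-1) + 2*q) * (T - ε*U) + 2*q*((n:ℝ)*T) - 2*q*(((m:ℝ) - ε*T)*T)) := by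
    have pull : (∑ i : Fin n, ∑ a : Fin m,
        (Mᵀ * M + ε • (1 : Matrix (Fin m) (Fin m) ℝ)).det ^ q * (4*q*(q-1)*(∑ k, S a k * M i k)^2 + 2*q*((∑ k, S a k * M i k)^2 + S a a - (∑ l, ∑ k, M i l * (S l k * M i k)) * S a a)))
        = (Mᵀ * M + ε • (1 : Matrix (Fin m) (Fin m) ℝ)).det ^ q *
          ∑ i : Fin n, ∑ a : Fin m, (4*q*(q-1)*(∑ k, S a k * M i k)^2 + 2*q*((∑ k, S a k * M i k)^2 + S a a - (∑ l, ∑ k, M i l * (S l k * M i k)) * S a a)) := by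
      rw [Finset.mul_sum]
      exact Finset.sum_congr rfl fun i _ => (Finset.mul_sum _ _ _).symm
    rw [pull]
    congr 1
    have e : ∀ (i : Fin n) (a : Fin m), (4*q*(q-1)*(∑ k, S a k * M i k)^2 + 2*q*((∑ k, S a k * M i k)^2 + S a a - (∑ l, ∑ k, M i l * (S l k * M i k)) * S a a))
        = (4*q*(q-1) + 2*q) * (∑ k, S a k * M i k)^2 + 2*q*(S a a)
            - 2*q*((∑ l, ∑ k, M i l * (S l k * M i k)) * S a a) := by
      intro i a; ring
    have s1 : ∑ i : Fin n, ∑ a : Fin m, (4*q*(q-1)+2*q) * (∑ k, S a k * M i k)^2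
        = (4*q*(q-1)+2*q)*(T - ε*U) := by
      rw [← hB, Finset.mul_sum]
      exact Finset.sum_congr rfl fun i _ => (Finset.mul_sum _ _ _).symm
    have s2 : ∑ _i : Fin n, ∑ a : Fin m, 2*q*(S a a) = 2*q*((n:ℝ)*T) := by
      have inner : ∑ a : Fin m, 2*q*(S a a) = 2*q*T := by
        rw [hT_def, Finset.mul_sum]
      rw [Finset.sum_congr rfl fun (_i : Fin n) _ => inner, Finset.sum_const,
        Finset.card_univ, Fintype.card_fin, nsmul_eq_mul]
      ring
    have s3 : ∑ i : Fin n, ∑ a : Fin m, 2*q*((∑ l, ∑ k, M i l * (S l k * M i k)) * S a a)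
        = 2*q*(((m:ℝ) - ε*T)*T) := by
      have inner : ∀ i : Fin n, ∑ a : Fin m, 2*q*((∑ l, ∑ k, M i l * (S l k * M i k)) * S a a)
          = (2*q*T) * (∑ l, ∑ k, M i l * (S l k * M i k)) := by
        intro i
        calc ∑ a : Fin m, 2*q*((∑ l, ∑ k, M i l * (S l k * M i k)) * S a a)
            = ∑ a : Fin m, (2*q*(∑ l, ∑ k, M i l * (S l k * M i k))) * S a a :=
              Finset.sum_congr rfl fun a _ => by ring
          _ = (2*q*(∑ l, ∑ k, M i l * (S l k * M i k))) * ∑ a : Fin m, S a a := (Finset.mul_sum _ _ _).symm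
          _ = (2*q*T) * (∑ l, ∑ k, M i l * (S l k * M i k)) := by rw [← hT_def]; ring
      rw [Finset.sum_congr rfl fun i _ => inner i, ← Finset.mul_sum, hAL]
      ring
    calc ∑ i : Fin n, ∑ a : Fin m, (4*q*(q-1)*(∑ k, S a k * M i k)^2 + 2*q*((∑ k, S a k * M i k)^2 + S a a - (∑ l, ∑ k, M i l * (S l k * M i k)) * S a a))
        = ∑ i : Fin n, ∑ a : Fin m, ((4*q*(q-1) + 2*q) * (∑ k, S a k * M i k)^2 + 2*q*(S a a)
            - 2*q*((∑ l, ∑ k, M i l * (S l k * M i k)) * S a a)) :=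
          Finset.sum_congr rfl fun i _ => Finset.sum_congr rfl fun a _ => e i a
      _ = (∑ i : Fin n, ∑ a : Fin m, (4*q*(q-1)+2*q) * (∑ k, S a k * M i k)^2)
            + (∑ i : Fin n, ∑ a : Fin m, 2*q*(S a a))
            - ∑ i : Fin n, ∑ a : Fin m, 2*q*((∑ l, ∑ k, M i l * (S l k * M i k)) * S a a) := by
          simp only [Finset.sum_sub_distrib, Finset.sum_add_distrib]
      _ = (4*q*(q-1) + 2*q) * (T - ε*U) + 2*q*((n:ℝ)*T) - 2*q*(((m:ℝ) - ε*T)*T) := by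
          rw [s1, s2, s3]
  rw [step0, step1]
  have hcast : (m:ℝ) + 2 ≤ (n:ℝ) := by exact_mod_cast hnm
  have hqneg : q < 0 := by rw [hq_def]; linarith
  have hE : (4*q*(q-1) + 2*q) * (T - ε*U) + 2*q*((n:ℝ)*T) - 2*q*(((m:ℝ) - ε*T)*T)
      = 2*q*(ε*(((n:ℝ) - (m:ℝ))*U + T^2)) := by
    rw [hq_def]; ring
  rw [hE]
  exact mul_neg_of_pos_of_neg (Real.rpow_pos_of_pos hD q)
    (mul_neg_of_neg_of_pos (by linarith)
      (mul_pos hε (add_pos (mul_pos (by linarith) hU) (pow_pos hT 2))))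
end

section
/- Let n, m be integers with n > m ≥ 1 and let ε > 0. Define f : ℝ^{n×m} → ℝ by f(M) = det(MᵀM + εI_m)^{−(n−m−1)/2} and write K = MᵀM + εI_m. Then for every column index a ∈ {1,…,m} and every M ∈ ℝ^{n×m}, Σ_{i=1}^n ∂²f/∂M_{ia}²(M) = −(n−m−1) ε f(M) [ (n−m) Σ_{b=1}^m ((K⁻¹)_{ab})² + (K⁻¹)_{aa} tr(K⁻¹) ]. In particular, if n − m ≥ 2 this quantity is strictly negative, so f is superharmonic as a function of each single column of M with the other columns held fixed. -/
open Matrix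

lemma myPosDef {n m : ℕ} (ε : ℝ) (hε : 0 < ε) (M : Matrix (Fin n) (Fin m) ℝ) :
    (Mᵀ * M + ε • (1 : Matrix (Fin m) (Fin m) ℝ)).PosDef := by
  have h1 : (Mᵀ * M).PosSemidef := by
    simpa using Matrix.posSemidef_conjTranspose_mul_self M
  have h2 : (ε • (1 : Matrix (Fin m) (Fin m) ℝ)).PosDef := by
    rw [smul_one_eq_diagonal]
    exact Matrix.PosDef.diagonal fun _ => hε
  exact Matrix.PosDef.posSemidef_add h1 h2

lemma myDet {n m : ℕ} (ε : ℝ) (hε : 0 < ε) (M : Matrix (Fin n) (Fin m) ℝ)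
    (i : Fin n) (a : Fin m) (t : ℝ) :
    ((M + t • Matrix.single i a 1)ᵀ * (M + t • Matrix.single i a 1)
      + ε • (1 : Matrix (Fin m) (Fin m) ℝ)).det
    = (Mᵀ * M + ε • (1 : Matrix (Fin m) (Fin m) ℝ)).det *
      (1 + 2 * (∑ b, M i b * (Mᵀ * M + ε • (1 : Matrix (Fin m) (Fin m) ℝ))⁻¹ b a) * t
        + ((∑ b, M i b * (Mᵀ * M + ε • (1 : Matrix (Fin m) (Fin m) ℝ))⁻¹ b a) ^ 2
          + (Mᵀ * M + ε • (1 : Matrix (Fin m) (Fin m) ℝ))⁻¹ a a *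
            (1 - ∑ b, ∑ c, M i b * ((Mᵀ * M + ε • (1 : Matrix (Fin m) (Fin m) ℝ))⁻¹ b c * M i c)))
          * t ^ 2) := by
  set K : Matrix (Fin m) (Fin m) ℝ := Mᵀ * M + ε • 1 with hKdef
  set N : Matrix (Fin m) (Fin m) ℝ := K⁻¹ with hNdef
  have hK : K.PosDef := myPosDef ε hε M
  have hKu : IsUnit K.det := hK.det_pos.ne'.isUnit
  have hsym : ∀ b c, N b c = N c b := by
    intro b c
    have h := hK.inv.1
    conv_lhs => rw [show N = K⁻¹ᴴ from hNdef.trans h.symm]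
    simp [Matrix.conjTranspose_apply]; rfl
  set α : ℝ := ∑ b, M i b * N b a with hα
  set β : ℝ := ∑ b, ∑ c, M i b * (N b c * M i c) with hβ
  set U : Matrix (Fin m) (Fin 2) ℝ :=
    fun b j => if j = 0 then (if a = b then 1 else 0) else t * M i b with hU
  set V : Matrix (Fin m) (Fin 2) ℝ :=
    fun b j => if j = 0 then t * M i b + t ^ 2 * (if a = b then 1 else 0)
      else (if a = b then 1 else 0) with hV
  have hstep1 : (M + t • Matrix.single i a 1)ᵀ * (M + t • Matrix.single i a 1)
      + ε • (1 : Matrix (Fin m) (Fin m) ℝ) = K + U * Vᵀ := by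
    ext b c
    have hUV : (U * Vᵀ) b c = U b 0 * V c 0 + U b 1 * V c 1 := by
      simp [Matrix.mul_apply, Fin.sum_univ_two]
    rw [show (K + U * Vᵀ) b c = K b c + (U * Vᵀ) b c from rfl, hUV]
    simp only [Matrix.add_apply, Matrix.mul_apply, Matrix.transpose_apply, Matrix.smul_apply,
      smul_eq_mul, hKdef, hUV, hU, hV, Matrix.single, Matrix.of_apply]
    rw [Finset.sum_congr rfl (fun k _ => show
      (M k b + t * if i = k ∧ a = b then 1 else 0) * (M k c + t * if i = k ∧ a = c then 1 else 0)
      = M k b * M k c + (if k = i then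
          ((if a = b then 1 else 0) * (t * M k c) + (if a = c then 1 else 0) * (M k b * t)
            + (if a = b then 1 else 0) * ((if a = c then 1 else 0) * (t * t))) else 0) from by
      by_cases h1 : i = k
      · subst h1
        by_cases h2 : a = b
        · subst h2
          by_cases h3 : a = c
          · subst h3; simp <;> ring
          · simp [h3] <;> ring
        · by_cases h3 : a = c
          · subst h3; simp [h2] <;> ring
          · simp [h2, h3] <;> ring
      · simp [h1, Ne.symm h1])]
    rw [Finset.sum_add_distrib, Finset.sum_ite_eq' Finset.univ i]
    simp only [Finset.mem_univ, if_true]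
    by_cases h2 : a = b
    · subst h2
      by_cases h3 : a = c
      · subst h3; simp <;> ring
      · simp [h3, Ne.symm h3] <;> ring
    · by_cases h3 : a = c
      · subst h3; simp [h2, Ne.symm h2] <;> ring
      · simp [h2, h3] <;> ring
  have hNU0 : ∀ b, (N * U) b 0 = N b a := by
    intro b
    rw [Matrix.mul_apply]; simp [hU, mul_ite, Finset.sum_ite_eq]
  have hNU1 : ∀ b, (N * U) b 1 = t * ∑ c, N b c * M i c := by
    intro b
    rw [Matrix.mul_apply]; simp only [hU]
    rw [Finset.mul_sum]
    exact Finset.sum_congr rfl fun c _ => by norm_num; ring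
  have hαalt : ∑ c, N a c * M i c = α := by
    rw [hα]
    exact Finset.sum_congr rfl fun c _ => by rw [hsym a c]; ring
  have hβ' : β = ∑ b, M i b * ∑ c, N b c * M i c := by
    rw [hβ]
    exact Finset.sum_congr rfl fun b _ => (Finset.mul_sum _ _ _).symm
  have hV0 : ∀ b, Vᵀ (0:Fin 2) b = t * M i b + t ^ 2 * (if a = b then 1 else 0) := fun b => by
    rw [Matrix.transpose_apply]; simp [hV]
  have hV1 : ∀ b, Vᵀ (1:Fin 2) b = (if a = b then 1 else 0) := fun b => by rw [Matrix.transpose_apply]; simp [hV]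
  have e00 : (Vᵀ * (N * U)) 0 0 = t * α + t ^ 2 * N a a := by
    rw [Matrix.mul_apply]
    calc ∑ b, Vᵀ (0:Fin 2) b * (N * U) b 0
        = ∑ b, (t * (M i b * N b a) + if a = b then t ^ 2 * N b a else 0) :=
          Finset.sum_congr rfl fun b _ => by rw [hV0, hNU0]; split_ifs <;> ring
      _ = t * α + t ^ 2 * N a a := by
          rw [Finset.sum_add_distrib, ← Finset.mul_sum, Finset.sum_ite_eq, hα]; simp
  have e10 : (Vᵀ * (N * U)) 1 0 = N a a := by
    rw [Matrix.mul_apply]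
    calc ∑ b, Vᵀ (1:Fin 2) b * (N * U) b 0
        = ∑ b, if a = b then N b a else 0 :=
          Finset.sum_congr rfl fun b _ => by rw [hV1, hNU0]; split_ifs <;> ring
      _ = N a a := by rw [Finset.sum_ite_eq]; simp
  have e01 : (Vᵀ * (N * U)) 0 1 = t ^ 2 * β + t ^ 3 * α := by
    rw [Matrix.mul_apply]
    calc ∑ b, Vᵀ (0:Fin 2) b * (N * U) b 1
        = ∑ b, (t ^ 2 * (M i b * ∑ c, N b c * M i c)
            + if a = b then t ^ 3 * ∑ c, N b c * M i c else 0) :=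
          Finset.sum_congr rfl fun b _ => by rw [hV0, hNU1]; split_ifs <;> ring
      _ = t ^ 2 * β + t ^ 3 * α := by
          rw [Finset.sum_add_distrib, ← Finset.mul_sum, Finset.sum_ite_eq, hβ']
          simp [hαalt]
  have e11 : (Vᵀ * (N * U)) 1 1 = t * α := by
    rw [Matrix.mul_apply]
    calc ∑ b, Vᵀ (1:Fin 2) b * (N * U) b 1
        = ∑ b, if a = b then t * ∑ c, N b c * M i c else 0 :=
          Finset.sum_congr rfl fun b _ => by rw [hV1, hNU1]; split_ifs <;> ring
      _ = t * α := by rw [Finset.sum_ite_eq]; simp; exact Or.inl hαalt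
  have hTwo : (1 + Vᵀ * (N * U)) =
      !![1 + (t * α + t ^ 2 * N a a), t ^ 2 * β + t ^ 3 * α; N a a, 1 + t * α] := by
    ext j k
    fin_cases j <;> fin_cases k <;>
      simp [Matrix.add_apply, Matrix.one_apply, e00, e10, e01, e11]
  have h2 : K + U * Vᵀ = K * (1 + N * U * Vᵀ) := by
    rw [mul_add, mul_one, hNdef, ← Matrix.mul_assoc, ← Matrix.mul_assoc,
      Matrix.mul_nonsing_inv _ hKu, Matrix.one_mul]
  rw [hstep1, h2, Matrix.det_mul, Matrix.det_one_add_mul_comm (N * U) Vᵀ, hTwo]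
  rw [Matrix.det_fin_two_of]
  ring

lemma mySecond (D P α c : ℝ) (hD : 0 < D)
    (hq : ∀ t : ℝ, 0 < 1 + 2 * α * t + c * t ^ 2) :
    iteratedDeriv 2 (fun t : ℝ => (D * (1 + 2 * α * t + c * t ^ 2)) ^ P) 0
      = D ^ P * (4 * P * (P - 1) * α ^ 2 + 2 * P * c) := by
  set q : ℝ → ℝ := fun t => 1 + 2 * α * t + c * t ^ 2 with hqdef
  have hq' : ∀ t, HasDerivAt q (2 * α + c * (2 * t)) t := by
    intro t
    have h1 : HasDerivAt (fun t : ℝ => t ^ 2) (2 * t) t := by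
      simpa using hasDerivAt_pow 2 t
    have h2 : HasDerivAt (fun t : ℝ => 1 + 2 * α * t) (2 * α) t := by
      simpa using ((hasDerivAt_id t).const_mul (2 * α)).const_add 1
    exact h2.add (h1.const_mul c)
  have hDq : ∀ t, HasDerivAt (fun t => D * q t) (D * (2 * α + c * (2 * t))) t :=
    fun t => (hq' t).const_mul D
  have hpos : ∀ t, 0 < D * q t := fun t => mul_pos hD (hq t)
  have h1 : ∀ t, HasDerivAt (fun t => (D * q t) ^ P)
      (D * (2 * α + c * (2 * t)) * P * (D * q t) ^ (P - 1)) t :=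
    fun t => (hDq t).rpow_const (Or.inl (hpos t).ne')
  have hd1 : deriv (fun t => (D * q t) ^ P)
      = fun t => D * (2 * α + c * (2 * t)) * P * (D * q t) ^ (P - 1) :=
    funext fun t => (h1 t).deriv
  have hu : HasDerivAt (fun t : ℝ => D * (2 * α + c * (2 * t)) * P) (D * (c * 2) * P) 0 := by
    have : HasDerivAt (fun t : ℝ => 2 * α + c * (2 * t)) (c * 2) 0 := by
      simpa using (((hasDerivAt_id (0:ℝ)).const_mul (2:ℝ)).const_mul c).const_add (2 * α)
    simpa using (this.const_mul D).mul_const P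
  have hv : HasDerivAt (fun t => (D * q t) ^ (P - 1))
      (D * (2 * α + c * (2 * 0)) * (P - 1) * (D * q 0) ^ (P - 1 - 1)) 0 :=
    (hDq 0).rpow_const (Or.inl (hpos 0).ne')
  have h2 : HasDerivAt (fun t => D * (2 * α + c * (2 * t)) * P * (D * q t) ^ (P - 1))
      (D * (c * 2) * P * (D * q 0) ^ (P - 1)
        + D * (2 * α + c * (2 * 0)) * P * (D * (2 * α + c * (2 * 0)) * (P - 1)
            * (D * q 0) ^ (P - 1 - 1))) 0 := by
    exact hu.mul hv
  have hq0 : q 0 = 1 := by simp [hqdef]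
  rw [iteratedDeriv_succ, iteratedDeriv_one, hd1]
  rw [h2.deriv, hq0]
  have hDne : D ≠ 0 := hD.ne'
  have e1 : (D * 1) ^ (P - 1) = D ^ P / D := by
    rw [mul_one, Real.rpow_sub hD, Real.rpow_one]
  have e2 : (D * 1) ^ (P - 1 - 1) = D ^ P / (D * D) := by
    rw [mul_one, Real.rpow_sub hD, Real.rpow_sub hD, Real.rpow_one, div_div]
  rw [e1, e2]
  field_simp
  ring

lemma myInvSymm {m : ℕ} {K : Matrix (Fin m) (Fin m) ℝ} (hK : K.PosDef) :
    ∀ b c, K⁻¹ b c = K⁻¹ c b := by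
  intro b c
  have h := hK.inv.1
  conv_lhs => rw [show K⁻¹ = K⁻¹ᴴ from h.symm]
  simp [Matrix.conjTranspose_apply]

lemma myDiagPos {m : ℕ} {A : Matrix (Fin m) (Fin m) ℝ} (hA : A.PosDef) (a : Fin m) :
    0 < A a a := by
  exact hA.diag_pos

lemma sumShuffle (n : ℕ) (DP P g : ℝ) (A B : Fin n → ℝ) :
    ∑ i, DP * (4 * P * (P - 1) * A i ^ 2 + 2 * P * (A i ^ 2 + g * (1 - B i)))
      = (DP * (4 * P * (P - 1) + 2 * P)) * (∑ i, A i ^ 2)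
        - (DP * 2 * P * g) * (∑ i, B i) + (n : ℝ) * (DP * 2 * P * g) := by
  rw [Finset.sum_congr rfl (fun i _ => show
    DP * (4 * P * (P - 1) * A i ^ 2 + 2 * P * (A i ^ 2 + g * (1 - B i)))
      = (DP * (4 * P * (P - 1) + 2 * P)) * A i ^ 2 - (DP * 2 * P * g) * B i
        + (DP * 2 * P * g) from by ring)]
  rw [Finset.sum_add_distrib, Finset.sum_sub_distrib, ← Finset.mul_sum, ← Finset.mul_sum,
    Finset.sum_const, Finset.card_univ, Fintype.card_fin, nsmul_eq_mul]

lemma sumA {n m : ℕ} (ε : ℝ) (M : Matrix (Fin n) (Fin m) ℝ)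
    (K N : Matrix (Fin m) (Fin m) ℝ) (hNK : N * K = 1) (hsym : ∀ b c, N b c = N c b)
    (hKM : ∀ b c, K b c = (∑ k, M k b * M k c) + ε * (if b = c then 1 else 0)) (a : Fin m) :
    ∑ i, (∑ b, M i b * N b a) ^ 2 = N a a - ε * ∑ b, (N a b) ^ 2 := by
  have h1 : ∀ b c, (∑ k, M k b * M k c) = K b c - ε * (if b = c then 1 else 0) := fun b c => by
    rw [hKM]; ring
  have key : ∀ c, ∑ b, (N b a * N c a) * K b c = N c a * (if a = c then 1 else 0) := by
    intro c
    calc ∑ b, (N b a * N c a) * K b c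
        = N c a * ∑ b, N a b * K b c := by
          rw [Finset.mul_sum]
          exact Finset.sum_congr rfl fun b _ => by rw [hsym b a]; ring
      _ = N c a * (N * K) a c := by rw [Matrix.mul_apply]
      _ = N c a * (if a = c then 1 else 0) := by rw [hNK, Matrix.one_apply]
  calc ∑ i, (∑ b, M i b * N b a) ^ 2
      = ∑ i, ∑ b, ∑ c, (M i b * N b a) * (M i c * N c a) := by
        refine Finset.sum_congr rfl fun i _ => ?_
        rw [sq, Finset.sum_mul_sum]
    _ = ∑ b, ∑ c, (N b a * N c a) * ∑ i, M i b * M i c := by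
        rw [Finset.sum_comm]
        refine Finset.sum_congr rfl fun b _ => ?_
        rw [Finset.sum_comm]
        refine Finset.sum_congr rfl fun c _ => ?_
        rw [Finset.mul_sum]
        exact Finset.sum_congr rfl fun i _ => by ring
    _ = ∑ b, ∑ c, ((N b a * N c a) * K b c - (if b = c then ε * (N b a * N c a) else 0)) := by
        refine Finset.sum_congr rfl fun b _ => Finset.sum_congr rfl fun c _ => ?_
        rw [h1]; split_ifs <;> ring
    _ = (∑ b, ∑ c, (N b a * N c a) * K b c) - ε * ∑ b, (N a b) ^ 2 := by
        simp only [Finset.sum_sub_distrib]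
        congr 1
        simp only [Finset.sum_ite_eq, Finset.mem_univ, if_true]
        rw [Finset.mul_sum]
        exact Finset.sum_congr rfl fun b _ => by rw [hsym a b]; ring
    _ = N a a - ε * ∑ b, (N a b) ^ 2 := by
        congr 1
        rw [Finset.sum_comm]
        simp only [key]
        simp [mul_ite, Finset.sum_ite_eq]
lemma sumB {n m : ℕ} (ε : ℝ) (M : Matrix (Fin n) (Fin m) ℝ)
    (K N : Matrix (Fin m) (Fin m) ℝ) (hNK : N * K = 1) (hsym : ∀ b c, N b c = N c b)
    (hKM : ∀ b c, K b c = (∑ k, M k b * M k c) + ε * (if b = c then 1 else 0)) :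
    ∑ i, ∑ b, ∑ c, M i b * (N b c * M i c) = (m : ℝ) - ε * ∑ b, N b b := by
  have h1 : ∀ b c, (∑ k, M k b * M k c) = K b c - ε * (if b = c then 1 else 0) := fun b c => by
    rw [hKM]; ring
  have hKsym : ∀ b c, K b c = K c b := by
    intro b c
    rw [hKM, hKM]
    congr 1
    · exact Finset.sum_congr rfl fun k _ => mul_comm _ _
    · congr 1
      simp [eq_comm]
  calc ∑ i, ∑ b, ∑ c, M i b * (N b c * M i c)
      = ∑ b, ∑ c, N b c * ∑ i, M i b * M i c := by
        rw [Finset.sum_comm]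
        refine Finset.sum_congr rfl fun b _ => ?_
        rw [Finset.sum_comm]
        refine Finset.sum_congr rfl fun c _ => ?_
        rw [Finset.mul_sum]
        exact Finset.sum_congr rfl fun i _ => by ring
    _ = ∑ b, ∑ c, (N b c * K c b - (if b = c then ε * N b c else 0)) := by
        refine Finset.sum_congr rfl fun b _ => Finset.sum_congr rfl fun c _ => ?_
        rw [h1, hKsym b c]; split_ifs <;> ring
    _ = (∑ b, (N * K) b b) - ε * ∑ b, N b b := by
        simp only [Finset.sum_sub_distrib]
        have e1 : (∑ b, ∑ c, N b c * K c b) = ∑ b, (N * K) b b :=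
          Finset.sum_congr rfl fun b _ => (Matrix.mul_apply (M := N) (N := K)).symm
        have e2 : (∑ b : Fin m, ∑ c : Fin m, if b = c then ε * N b c else 0)
            = ε * ∑ b, N b b := by
          simp only [Finset.sum_ite_eq, Finset.mem_univ, if_true]
          rw [Finset.mul_sum]
        rw [e1, e2]
    _ = (m : ℝ) - ε * ∑ b, N b b := by
        rw [hNK]
        simp [Matrix.one_apply]

lemma myPer {n m : ℕ} (ε : ℝ) (hε : 0 < ε) (M : Matrix (Fin n) (Fin m) ℝ)
    (i : Fin n) (a : Fin m) (P : ℝ) :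
    iteratedDeriv 2 (fun t : ℝ =>
      ((M + t • Matrix.single i a 1)ᵀ * (M + t • Matrix.single i a 1)
        + ε • (1 : Matrix (Fin m) (Fin m) ℝ)).det ^ P) 0
    = (Mᵀ * M + ε • (1 : Matrix (Fin m) (Fin m) ℝ)).det ^ P *
        (4 * P * (P - 1) * (∑ b, M i b * (Mᵀ * M + ε • (1 : Matrix (Fin m) (Fin m) ℝ))⁻¹ b a) ^ 2
          + 2 * P * ((∑ b, M i b * (Mᵀ * M + ε • (1 : Matrix (Fin m) (Fin m) ℝ))⁻¹ b a) ^ 2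
            + (Mᵀ * M + ε • (1 : Matrix (Fin m) (Fin m) ℝ))⁻¹ a a *
              (1 - ∑ b, ∑ c, M i b *
                ((Mᵀ * M + ε • (1 : Matrix (Fin m) (Fin m) ℝ))⁻¹ b c * M i c)))) := by
  have hD := (myPosDef ε hε M).det_pos
  have hq : ∀ t : ℝ, 0 < 1
      + 2 * (∑ b, M i b * (Mᵀ * M + ε • (1 : Matrix (Fin m) (Fin m) ℝ))⁻¹ b a) * t
      + ((∑ b, M i b * (Mᵀ * M + ε • (1 : Matrix (Fin m) (Fin m) ℝ))⁻¹ b a) ^ 2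
          + (Mᵀ * M + ε • (1 : Matrix (Fin m) (Fin m) ℝ))⁻¹ a a *
            (1 - ∑ b, ∑ c, M i b *
              ((Mᵀ * M + ε • (1 : Matrix (Fin m) (Fin m) ℝ))⁻¹ b c * M i c))) * t ^ 2 := by
    intro t
    have h1 := (myPosDef ε hε (M + t • Matrix.single i a 1)).det_pos
    rw [myDet ε hε M i a t] at h1
    rcases mul_pos_iff.mp h1 with ⟨_, h⟩ | ⟨h, _⟩
    · exact h
    · linarith
  simp only [myDet ε hε M i a]
  exact mySecond _ P _ _ hD hq

theorem stmt2 (n m : ℕ) (hm : 1 ≤ m) (hnm : m < n) (ε : ℝ) (hε : 0 < ε)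
    (f : Matrix (Fin n) (Fin m) ℝ → ℝ)
    (hf : f = fun M => ((Mᵀ * M + ε • (1 : Matrix (Fin m) (Fin m) ℝ)).det)
      ^ (-(((n : ℝ) - m - 1)) / 2)) :
    (∀ (a : Fin m) (M : Matrix (Fin n) (Fin m) ℝ),
      ∑ i : Fin n, matSecondPartial f M i a =
        -(((n : ℝ) - m - 1)) * ε * f M *
          (((n : ℝ) - m) *
              (∑ b : Fin m,
                (((Mᵀ * M + ε • (1 : Matrix (Fin m) (Fin m) ℝ))⁻¹) a b) ^ 2) +
            ((Mᵀ * M + ε • (1 : Matrix (Fin m) (Fin m) ℝ))⁻¹) a a *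
              ((Mᵀ * M + ε • (1 : Matrix (Fin m) (Fin m) ℝ))⁻¹).trace)) ∧
    (m + 2 ≤ n → ∀ (a : Fin m) (M : Matrix (Fin n) (Fin m) ℝ),
      ∑ i : Fin n, matSecondPartial f M i a < 0) := by
  subst hf
  have main : ∀ (a : Fin m) (M : Matrix (Fin n) (Fin m) ℝ),
      ∑ i : Fin n, matSecondPartial
        (fun M => ((Mᵀ * M + ε • (1 : Matrix (Fin m) (Fin m) ℝ)).det)
          ^ (-(((n : ℝ) - m - 1)) / 2)) M i a =
        -(((n : ℝ) - m - 1)) * ε *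
          ((Mᵀ * M + ε • (1 : Matrix (Fin m) (Fin m) ℝ)).det) ^ (-(((n : ℝ) - m - 1)) / 2) *
          (((n : ℝ) - m) *
              (∑ b : Fin m,
                (((Mᵀ * M + ε • (1 : Matrix (Fin m) (Fin m) ℝ))⁻¹) a b) ^ 2) +
            ((Mᵀ * M + ε • (1 : Matrix (Fin m) (Fin m) ℝ))⁻¹) a a *
              ((Mᵀ * M + ε • (1 : Matrix (Fin m) (Fin m) ℝ))⁻¹).trace) := by
    intro a M
    have hKpd := myPosDef ε hε M
    have hD := hKpd.det_pos
    have hKu : IsUnit (Mᵀ * M + ε • (1 : Matrix (Fin m) (Fin m) ℝ)).det := hD.ne'.isUnit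
    have hNK : (Mᵀ * M + ε • (1 : Matrix (Fin m) (Fin m) ℝ))⁻¹
        * (Mᵀ * M + ε • (1 : Matrix (Fin m) (Fin m) ℝ)) = 1 := Matrix.nonsing_inv_mul _ hKu
    have hsym := myInvSymm hKpd
    have hKM : ∀ b c, (Mᵀ * M + ε • (1 : Matrix (Fin m) (Fin m) ℝ)) b c
        = (∑ k, M k b * M k c) + ε * (if b = c then 1 else 0) := by
      intro b c
      simp [Matrix.add_apply, Matrix.mul_apply, Matrix.one_apply]
    have hper : ∀ i : Fin n, matSecondPartial
        (fun M => ((Mᵀ * M + ε • (1 : Matrix (Fin m) (Fin m) ℝ)).det)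
          ^ (-(((n : ℝ) - m - 1)) / 2)) M i a
        = (Mᵀ * M + ε • (1 : Matrix (Fin m) (Fin m) ℝ)).det ^ (-(((n : ℝ) - m - 1)) / 2) *
          (4 * (-(((n : ℝ) - m - 1)) / 2) * ((-(((n : ℝ) - m - 1)) / 2) - 1)
              * (∑ b, M i b * (Mᵀ * M + ε • (1 : Matrix (Fin m) (Fin m) ℝ))⁻¹ b a) ^ 2
            + 2 * (-(((n : ℝ) - m - 1)) / 2) *
              ((∑ b, M i b * (Mᵀ * M + ε • (1 : Matrix (Fin m) (Fin m) ℝ))⁻¹ b a) ^ 2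
                + (Mᵀ * M + ε • (1 : Matrix (Fin m) (Fin m) ℝ))⁻¹ a a *
                  (1 - ∑ b, ∑ c, M i b *
                    ((Mᵀ * M + ε • (1 : Matrix (Fin m) (Fin m) ℝ))⁻¹ b c * M i c)))) :=
      fun i => myPer ε hε M i a (-(((n : ℝ) - m - 1)) / 2)
    rw [Finset.sum_congr rfl (fun i _ => hper i)]
    rw [sumShuffle n _ (-(((n : ℝ) - m - 1)) / 2)
      ((Mᵀ * M + ε • (1 : Matrix (Fin m) (Fin m) ℝ))⁻¹ a a)
      (fun i => ∑ b, M i b * (Mᵀ * M + ε • (1 : Matrix (Fin m) (Fin m) ℝ))⁻¹ b a)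
      (fun i => ∑ b, ∑ c, M i b * ((Mᵀ * M + ε • (1 : Matrix (Fin m) (Fin m) ℝ))⁻¹ b c * M i c))]
    rw [sumA ε M _ _ hNK hsym hKM a, sumB ε M _ _ hNK hsym hKM]
    have htr : ((Mᵀ * M + ε • (1 : Matrix (Fin m) (Fin m) ℝ))⁻¹).trace
        = ∑ b, (Mᵀ * M + ε • (1 : Matrix (Fin m) (Fin m) ℝ))⁻¹ b b := by
      simp [Matrix.trace, Matrix.diag]
    rw [htr]
    ring
  refine ⟨main, fun hn a M => ?_⟩
  rw [main a M]
  have hKpd := myPosDef ε hε M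
  have hD := hKpd.det_pos
  have hNpd := hKpd.inv
  have hγ := myDiagPos hNpd a
  have hT : 0 < ∑ b, (Mᵀ * M + ε • (1 : Matrix (Fin m) (Fin m) ℝ))⁻¹ b b :=
    Finset.sum_pos (fun b _ => myDiagPos hNpd b) ⟨a, Finset.mem_univ a⟩
  have hW : 0 < ∑ b, ((Mᵀ * M + ε • (1 : Matrix (Fin m) (Fin m) ℝ))⁻¹ a b) ^ 2 := by
    have h1 : ((Mᵀ * M + ε • (1 : Matrix (Fin m) (Fin m) ℝ))⁻¹ a a) ^ 2
        ≤ ∑ b, ((Mᵀ * M + ε • (1 : Matrix (Fin m) (Fin m) ℝ))⁻¹ a b) ^ 2 :=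
      Finset.single_le_sum (f := fun b => ((Mᵀ * M + ε • (1 : Matrix (Fin m) (Fin m) ℝ))⁻¹ a b) ^ 2)
        (fun b _ => sq_nonneg _) (Finset.mem_univ a)
    nlinarith
  have hcast : (m : ℝ) + 2 ≤ (n : ℝ) := by exact_mod_cast hn
  have hfM : 0 < (Mᵀ * M + ε • (1 : Matrix (Fin m) (Fin m) ℝ)).det
      ^ (-(((n : ℝ) - m - 1)) / 2) := Real.rpow_pos_of_pos hD _
  have htr : 0 < ((Mᵀ * M + ε • (1 : Matrix (Fin m) (Fin m) ℝ))⁻¹).trace := by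
    have : ((Mᵀ * M + ε • (1 : Matrix (Fin m) (Fin m) ℝ))⁻¹).trace
        = ∑ b, (Mᵀ * M + ε • (1 : Matrix (Fin m) (Fin m) ℝ))⁻¹ b b := by
      simp [Matrix.trace, Matrix.diag]
    rw [this]; exact hT
  have hbr : 0 < ((n : ℝ) - m) *
      (∑ b : Fin m, (((Mᵀ * M + ε • (1 : Matrix (Fin m) (Fin m) ℝ))⁻¹) a b) ^ 2) +
      ((Mᵀ * M + ε • (1 : Matrix (Fin m) (Fin m) ℝ))⁻¹) a a *
        ((Mᵀ * M + ε • (1 : Matrix (Fin m) (Fin m) ℝ))⁻¹).trace :=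
    add_pos (mul_pos (by linarith) hW) (mul_pos hγ htr)
  have hc : 0 < ((n : ℝ) - m - 1) := by linarith
  have := mul_pos (mul_pos (mul_pos hc hε) hfM) hbr
  linarith [this]
end

section
/- (Theorem 2) Let n, m be integers with m ≥ 1 and n − m ≥ 2. On the open set of matrices M ∈ ℝ^{n×m} of full rank m (equivalently, MᵀM invertible), the function M ↦ det(MᵀM)^{−(n−m−1)/2} is twice continuously differentiable and its Laplacian vanishes: Δ det(MᵀM)^{−(n−m−1)/2} = 0 at every full-rank M. -/
open Matrix

attribute [local instance] Matrix.frobeniusNormedAddCommGroup Matrix.frobeniusNormedSpace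

/-- Second derivative at 0 of `t ↦ (g*(1+2qt+ct²))^α` for `g > 0`. -/
lemma second_deriv_rpow_quad (g q c α : ℝ) (hg : 0 < g) :
    iteratedDeriv 2 (fun t : ℝ => (g * (1 + 2*q*t + c*t^2)) ^ α) 0
      = g ^ α * (2*c*α + 4*q^2*α*(α-1)) := by
  set φ : ℝ → ℝ := fun t => g * (1 + 2*q*t + c*t^2) with hφ
  have hφd : ∀ t : ℝ, HasDerivAt φ (g * (2*q + 2*c*t)) t := by
    intro t
    have h1 : HasDerivAt (fun t : ℝ => 1 + 2*q*t + c*t^2) (2*q + 2*c*t) t := by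
      have := (((hasDerivAt_id t).const_mul (2*q)).const_add 1).add
        ((hasDerivAt_pow 2 t).const_mul c)
      exact this.congr_deriv (by norm_num; ring)
    have h2 := h1.const_mul g
    convert h2 using 2 <;> ring
  set G : ℝ → ℝ := fun t => g * (2*q + 2*c*t) * α * φ t ^ (α - 1) with hG
  have hS : ∀ᶠ t in nhds (0:ℝ), 0 < φ t := by
    have hcont : Continuous φ := by fun_prop
    have : φ 0 = g := by simp [hφ]
    have h0 : 0 < φ 0 := by rw [this]; exact hg
    exact (hcont.tendsto 0).eventually (eventually_gt_nhds h0) |>.mono (fun t ht => ht)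
  have hev : deriv (fun t : ℝ => φ t ^ α) =ᶠ[nhds (0:ℝ)] G := by
    filter_upwards [hS] with t ht
    exact ((hφd t).rpow_const (Or.inl ht.ne')).deriv
  have key : iteratedDeriv 2 (fun t : ℝ => φ t ^ α) 0 = deriv G 0 := by
    rw [show (2:ℕ) = 1 + 1 from rfl, iteratedDeriv_succ, iteratedDeriv_one]
    exact Filter.EventuallyEq.deriv_eq hev
  have hφ0 : φ 0 = g := by simp [hφ]
  have hGd : HasDerivAt G (g*(2*c)*α * g ^ (α-1)
      + (g*(2*q)*α) * (g*(2*q) * (α-1) * g ^ (α-1-1))) 0 := by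
    have hu : HasDerivAt (fun t : ℝ => g * (2*q + 2*c*t) * α) (g*(2*c)*α) 0 := by
      have := (((hasDerivAt_id (0:ℝ)).const_mul (2*c)).const_add (2*q)).const_mul g
      have := this.mul_const α
      simpa using this
    have hv : HasDerivAt (fun t : ℝ => φ t ^ (α-1)) (g*(2*q) * (α-1) * g ^ (α-1-1)) 0 := by
      have := (hφd 0).rpow_const (p := α - 1) (Or.inl (by rw [hφ0]; exact hg.ne'))
      simpa [hφ0] using this
    have := hu.mul hv
    simp [hφ0] at this; exact this
  rw [key, hGd.deriv]
  have e1 : g ^ (α-1) = g ^ α / g := by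
    rw [Real.rpow_sub hg, Real.rpow_one]
  have e2 : g ^ (α-1-1) = g ^ α / g / g := by
    rw [Real.rpow_sub hg, Real.rpow_sub hg, Real.rpow_one]
  rw [e1, e2]
  field_simp
  ring

/-- Key determinant identity: along a coordinate direction, `det((M+tE)ᵀ(M+tE))` is an explicit
quadratic polynomial in `t`. -/
lemma det_quad {n m : ℕ} (M : Matrix (Fin n) (Fin m) ℝ)
    (hA : IsUnit (Mᵀ * M).det) (i : Fin n) (a : Fin m) (t : ℝ) :
    ((M + t • Matrix.single i a 1)ᵀ * (M + t • Matrix.single i a 1)).det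
      = (Mᵀ * M).det * (1 + 2 * ((Mᵀ * M)⁻¹ * Mᵀ) a i * t
          + ((Mᵀ * M)⁻¹ a a + (((Mᵀ * M)⁻¹ * Mᵀ) a i)^2
            - (Mᵀ * M)⁻¹ a a * (M * (Mᵀ * M)⁻¹ * Mᵀ) i i) * t^2) := by
  set A := Mᵀ * M with hAdef
  haveI : Invertible A := A.invertibleOfIsUnitDet hA
  set p : ℝ := A⁻¹ a a
  set q : ℝ := (A⁻¹ * Mᵀ) a i
  set r : ℝ := (M * A⁻¹ * Mᵀ) i i
  set U : Matrix (Fin m) (Fin 2) ℝ :=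
    Matrix.of (fun b j => if j = 0 then (if a = b then (1:ℝ) else 0) else M i b) with hU
  set V : Matrix (Fin 2) (Fin m) ℝ :=
    Matrix.of (fun j b => if j = 0 then -(t^2 * (if a = b then (1:ℝ) else 0) + t * M i b)
      else -(t * (if a = b then (1:ℝ) else 0))) with hV
  have hmat : (M + t • Matrix.single i a 1)ᵀ * (M + t • Matrix.single i a 1)
      = A - U * V := by
    ext b c
    simp only [Matrix.mul_apply, Matrix.sub_apply, Matrix.add_apply, Matrix.transpose_apply,
      Matrix.smul_apply, Matrix.single, Matrix.of_apply, smul_eq_mul, hAdef, hU, hV,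
      Fin.sum_univ_two]
    have step : ∀ k : Fin n,
        (M k b + t * (if i = k ∧ a = b then (1:ℝ) else 0)) *
          (M k c + t * (if i = k ∧ a = c then (1:ℝ) else 0))
        = M k b * M k c + (if i = k then
            (t * (if a = b then (1:ℝ) else 0) * M k c + t * (if a = c then (1:ℝ) else 0) * M k b
              + t^2 * (if a = b then (1:ℝ) else 0) * (if a = c then (1:ℝ) else 0)) else 0) := by
      intro k
      by_cases hk : i = k <;> by_cases h1 : a = b <;> by_cases h2 : a = c <;>
        simp only [hk, h1, h2, if_true, if_false, true_and, false_and, and_true, and_false,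
          eq_self_iff_true, if_pos, if_neg, not_false_iff, mul_one, mul_zero, zero_mul,
          add_zero, ite_true, ite_false] <;> ring
    rw [Finset.sum_congr rfl fun k _ => step k, Finset.sum_add_distrib,
      Finset.sum_ite_eq Finset.univ i]
    simp only [Finset.mem_univ, if_true]
    by_cases h1 : a = b <;> by_cases h2 : a = c
    · subst h1; subst h2; simp; ring
    · subst h1; simp [h2]
    · subst h2; simp [h1]; ring
    · simp [h1, h2]
  rw [hmat, ← Matrix.det_fromBlocks_one₂₂ A U V, Matrix.det_fromBlocks₁₁,
    Matrix.invOf_eq_nonsing_inv]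
  congr 1
  have hAinvT : A⁻¹ᵀ = A⁻¹ := by
    rw [Matrix.transpose_nonsing_inv]
    congr 1
    rw [hAdef, Matrix.transpose_mul, Matrix.transpose_transpose]
  have hsymm : ∀ b c : Fin m, A⁻¹ b c = A⁻¹ c b := by
    intro b c
    conv_lhs => rw [← hAinvT]
    rfl
  have row0 : ∀ b, (V * A⁻¹) 0 b = -(t^2 * A⁻¹ a b + t * (M * A⁻¹) i b) := by
    intro b
    rw [Matrix.mul_apply, Matrix.mul_apply]
    simp only [hV, Matrix.of_apply, if_pos rfl]
    simp only [neg_mul, add_mul, ite_mul, one_mul, zero_mul, mul_ite, mul_one, mul_zero,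
      Finset.sum_neg_distrib, Finset.sum_add_distrib, Finset.sum_ite_eq, Finset.mem_univ,
      if_true, mul_assoc, ← Finset.mul_sum]
  have row1 : ∀ b, (V * A⁻¹) 1 b = -(t * A⁻¹ a b) := by
    intro b
    rw [Matrix.mul_apply]
    simp only [hV, Matrix.of_apply]
    norm_num
  have hMq : (M * A⁻¹) i a = q := by
    rw [Matrix.mul_apply, show q = ∑ c, A⁻¹ a c * Mᵀ c i from Matrix.mul_apply]
    exact Finset.sum_congr rfl fun c _ => by rw [Matrix.transpose_apply, hsymm a c]; ring
  have e00 : (V * A⁻¹ * U) 0 0 = -(t^2 * p + t * q) := by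
    rw [Matrix.mul_apply]
    simp only [hU, Matrix.of_apply, if_pos rfl, row0, mul_ite, mul_one, mul_zero,
      Finset.sum_ite_eq, Finset.mem_univ, if_true]
    rw [hMq]
  have h2 : ∑ b, A⁻¹ a b * M i b = q := by
    rw [show q = ∑ c, A⁻¹ a c * Mᵀ c i from Matrix.mul_apply]
    rfl
  have h3 : ∑ b, (M * A⁻¹) i b * M i b = r := by
    rw [show r = ∑ c, (M * A⁻¹) i c * Mᵀ c i from Matrix.mul_apply]
    rfl
  have hU1 : ∀ b, U b 1 = M i b := by
    intro b; simp [hU]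
  have e01 : (V * A⁻¹ * U) 0 1 = -(t^2 * q + t * r) := by
    rw [Matrix.mul_apply]
    simp only [hU1, row0]
    calc ∑ b, -(t ^ 2 * A⁻¹ a b + t * (M * A⁻¹) i b) * M i b
        = -(t^2 * ∑ b, A⁻¹ a b * M i b + t * ∑ b, (M * A⁻¹) i b * M i b) := by
          rw [Finset.mul_sum, Finset.mul_sum, ← Finset.sum_add_distrib, ← Finset.sum_neg_distrib]
          exact Finset.sum_congr rfl fun b _ => by ring
      _ = -(t^2 * q + t * r) := by rw [h2, h3]
  have e10 : (V * A⁻¹ * U) 1 0 = -(t * p) := by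
    rw [Matrix.mul_apply]
    simp only [hU, Matrix.of_apply, if_pos rfl, row1, mul_ite, mul_one, mul_zero,
      Finset.sum_ite_eq, Finset.mem_univ, if_true]
    rfl
  have e11 : (V * A⁻¹ * U) 1 1 = -(t * q) := by
    rw [Matrix.mul_apply]
    simp only [hU1, row1]
    calc ∑ b, -(t * A⁻¹ a b) * M i b
        = -(t * ∑ b, A⁻¹ a b * M i b) := by
          rw [Finset.mul_sum, ← Finset.sum_neg_distrib]
          exact Finset.sum_congr rfl fun b _ => by ring
      _ = -(t * q) := by rw [h2]
  rw [Matrix.det_fin_two]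
  simp only [Matrix.sub_apply, Matrix.one_apply_eq, Matrix.one_apply_ne (by decide : (0:Fin 2) ≠ 1),
    Matrix.one_apply_ne (by decide : (1:Fin 2) ≠ 0), e00, e01, e10, e11]
  ring

lemma detMTM_contDiff {n m : ℕ} :
    ContDiff ℝ ⊤ (fun M : Matrix (Fin n) (Fin m) ℝ => (Mᵀ * M).det) := by
  have hcoord : ∀ (k : Fin n) (b : Fin m),
      ContDiff ℝ ⊤ (fun M : Matrix (Fin n) (Fin m) ℝ => M k b) := fun k b =>
    (LinearMap.toContinuousLinearMap
      ({ toFun := fun M => M k b,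
         map_add' := fun _ _ => rfl, map_smul' := fun _ _ => rfl } :
        Matrix (Fin n) (Fin m) ℝ →ₗ[ℝ] ℝ)).contDiff
  have : (fun M : Matrix (Fin n) (Fin m) ℝ => (Mᵀ * M).det)
      = fun M => ∑ σ : Equiv.Perm (Fin m), (Equiv.Perm.sign σ : ℝ) *
          ∏ b : Fin m, (∑ k : Fin n, M k (σ b) * M k b) := by
    funext M
    rw [Matrix.det_apply']
    exact Finset.sum_congr rfl fun σ _ => by congr 1
  rw [this]
  apply ContDiff.sum
  intro σ _
  apply ContDiff.mul contDiff_const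
  apply contDiff_prod
  intro b _
  apply ContDiff.sum
  intro k _
  exact (hcoord k (σ b)).mul (hcoord k b)

lemma det_pos_of_isUnit {n m : ℕ} (M : Matrix (Fin n) (Fin m) ℝ)
    (hA : IsUnit (Mᵀ * M).det) : 0 < (Mᵀ * M).det := by
  have hps : (Mᵀ * M).PosSemidef := by
    have := Matrix.posSemidef_conjTranspose_mul_self M
    rwa [Matrix.conjTranspose_eq_transpose_of_trivial] at this
  have h0 : (0:ℝ) ≤ (Mᵀ * M).det := by
    rw [hps.isHermitian.det_eq_prod_eigenvalues]
    exact Finset.prod_nonneg fun j _ => by simpa using hps.eigenvalues_nonneg j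
  rcases lt_or_eq_of_le h0 with h | h
  · exact h
  · exact absurd h.symm (by simpa using hA.ne_zero)

theorem stmt4 (n m : ℕ) (hm : 1 ≤ m) (hnm : m + 2 ≤ n)
    (f : Matrix (Fin n) (Fin m) ℝ → ℝ)
    (hf : f = fun M => ((Mᵀ * M).det) ^ (-(((n : ℝ) - m - 1)) / 2)) :
    ContDiffOn ℝ 2 f {M : Matrix (Fin n) (Fin m) ℝ | IsUnit (Mᵀ * M).det} ∧
    ∀ M : Matrix (Fin n) (Fin m) ℝ, IsUnit (Mᵀ * M).det → matLaplacian f M = 0 := by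
  set α : ℝ := -(((n : ℝ) - m - 1)) / 2 with hα
  constructor
  · -- smoothness
    intro M hM
    have hg : 0 < (Mᵀ * M).det := det_pos_of_isUnit M hM
    have h1 : ContDiffAt ℝ 2 (fun x : ℝ => x ^ α) ((Mᵀ * M).det) :=
      Real.contDiffAt_rpow_const_of_ne hg.ne'
    have h2 : ContDiffAt ℝ 2 (fun M : Matrix (Fin n) (Fin m) ℝ => (Mᵀ * M).det) M :=
      (detMTM_contDiff.of_le le_top).contDiffAt
    have := h1.comp M h2
    rw [hf]
    exact this.contDiffWithinAt
  · -- Laplacian vanishes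
    intro M hM
    have hg : 0 < (Mᵀ * M).det := det_pos_of_isUnit M hM
    haveI : Invertible (Mᵀ * M) := (Mᵀ * M).invertibleOfIsUnitDet hM
    set A := Mᵀ * M with hAdef
    set g : ℝ := A.det with hgdef
    set p : Fin m → ℝ := fun a => A⁻¹ a a with hp
    set q : Fin n → Fin m → ℝ := fun i a => (A⁻¹ * Mᵀ) a i with hq
    set r : Fin n → ℝ := fun i => (M * A⁻¹ * Mᵀ) i i with hr
    have key : ∀ (i : Fin n) (a : Fin m), matSecondPartial f M i a
        = g ^ α * (2*(p a + (q i a)^2 - p a * r i)*α + 4*(q i a)^2*α*(α-1)) := by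
      intro i a
      rw [matSecondPartial, hf]
      have hfun : (fun t : ℝ =>
          ((M + t • Matrix.single i a 1)ᵀ * (M + t • Matrix.single i a 1)).det
            ^ (-(((n : ℝ) - m - 1)) / 2))
          = fun t : ℝ => (g * (1 + 2*(q i a)*t + (p a + (q i a)^2 - p a * r i)*t^2)) ^ α := by
        funext t
        rw [det_quad M hM i a t]
      rw [hfun]
      exact second_deriv_rpow_quad g (q i a) (p a + (q i a)^2 - p a * r i) α hg
    -- the two structural sum identities
    have hAinvT : A⁻¹ᵀ = A⁻¹ := by
      rw [Matrix.transpose_nonsing_inv]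
      congr 1
      rw [hAdef, Matrix.transpose_mul, Matrix.transpose_transpose]
    have hR : ∑ i : Fin n, r i = (m : ℝ) := by
      have h1 : ∑ i : Fin n, r i = Matrix.trace (M * A⁻¹ * Mᵀ) := rfl
      rw [h1, Matrix.trace_mul_comm (M * A⁻¹) Mᵀ, ← Matrix.mul_assoc, ← hAdef,
        Matrix.mul_nonsing_inv A hM, Matrix.trace_one]
      simp
    have hQ : ∀ a : Fin m, ∑ i : Fin n, (q i a)^2 = p a := by
      intro a
      have hmatQ : (A⁻¹ * Mᵀ) * (A⁻¹ * Mᵀ)ᵀ = A⁻¹ := by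
        rw [Matrix.transpose_mul, Matrix.transpose_transpose, hAinvT, Matrix.mul_assoc,
          ← Matrix.mul_assoc Mᵀ M A⁻¹, ← hAdef, Matrix.mul_nonsing_inv A hM, Matrix.mul_one]
      have h1 : ∑ i : Fin n, (q i a)^2 = ((A⁻¹ * Mᵀ) * (A⁻¹ * Mᵀ)ᵀ) a a := by
        rw [Matrix.mul_apply]
        exact Finset.sum_congr rfl fun i _ => by
          rw [Matrix.transpose_apply]; rw [hq]; ring
      rw [h1, hmatQ, hp]
    -- assemble
    rw [matLaplacian, Finset.sum_comm]
    apply Finset.sum_eq_zero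
    intro a _
    have hsum : ∑ i : Fin n, matSecondPartial f M i a
        = g ^ α * ((n:ℝ)*(2*p a*α) - 2*p a*α*(∑ i, r i) + (4*α^2-2*α)*(∑ i, (q i a)^2)) := by
      rw [Finset.sum_congr rfl fun i _ => key i a, ← Finset.mul_sum]
      congr 1
      calc ∑ i : Fin n, (2*(p a + (q i a)^2 - p a * r i)*α + 4*(q i a)^2*α*(α-1))
          = ∑ i : Fin n, (2*p a*α + (-(2*p a*α))*r i + (4*α^2-2*α)*(q i a)^2) :=
            Finset.sum_congr rfl fun i _ => by ring
        _ = (∑ _i : Fin n, 2*p a*α) + (-(2*p a*α))*(∑ i, r i)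
              + (4*α^2-2*α)*(∑ i, (q i a)^2) := by
            rw [Finset.sum_add_distrib, Finset.sum_add_distrib, Finset.mul_sum, Finset.mul_sum]
        _ = (n:ℝ)*(2*p a*α) - 2*p a*α*(∑ i, r i) + (4*α^2-2*α)*(∑ i, (q i a)^2) := by
            rw [Finset.sum_const, Finset.card_univ, Fintype.card_fin, nsmul_eq_mul]
            ring
    rw [hsum, hR, hQ a]
    have hαz : (n:ℝ)*(2*p a*α) - 2*p a*α*(m:ℝ) + (4*α^2-2*α)*(p a) = 0 := by
      rw [hα]; ring
    rw [hαz, mul_zero]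
end

section
/- (Lemma 1) Let d ≥ 1, let π : ℝ^d → [0,∞] be superharmonic, and let Σ be a d×d positive definite matrix with Gaussian density φ_Σ(x) = (2π)^{−d/2} (det Σ)^{−1/2} exp(−½ xᵀΣ⁻¹x). If the marginal m_π(x) = ∫_{ℝ^d} φ_Σ(x − a) π(a) da is finite for every x ∈ ℝ^d, then m_π is superharmonic: it is lower semicontinuous, not identically +∞, and for every x ∈ ℝ^d and every δ > 0 the integral of m_π over the sphere {z : ‖z − x‖ = δ} with respect to the normalized (d−1)-dimensional surface (Hausdorff) measure is at most m_π(x). -/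
open Matrix MeasureTheory Metric ENNReal

/-- A function `f : ℝ^d → [0,∞]` is superharmonic if it is lower semicontinuous, not
identically `+∞`, and its mean over every sphere (with respect to the normalized
`(d-1)`-dimensional Hausdorff surface measure) is at most its value at the center. -/
def SuperharmonicFn (d : ℕ) (f : EuclideanSpace ℝ (Fin d) → ℝ≥0∞) : Prop :=
  LowerSemicontinuous f ∧ (∃ x, f x ≠ ⊤) ∧
    ∀ (x : EuclideanSpace ℝ (Fin d)) (δ : ℝ), 0 < δ →
      ∫⁻ z in sphere x δ, f z
          ∂((μH[(d : ℝ) - 1] (sphere x δ))⁻¹ • μH[(d : ℝ) - 1]) ≤ f x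

/-- The centered Gaussian density on `ℝ^d` with covariance matrix `S`:
`φ_S(x) = (2π)^{-d/2} (det S)^{-1/2} exp(-½ xᵀ S⁻¹ x)`. -/
noncomputable def gaussDensityMat (d : ℕ) (S : Matrix (Fin d) (Fin d) ℝ)
    (x : EuclideanSpace ℝ (Fin d)) : ℝ :=
  (2 * Real.pi) ^ (-(d : ℝ) / 2) * S.det ^ (-(1 : ℝ) / 2) *
    Real.exp (-(1 / 2) * ((fun i => x i) ⬝ᵥ (S⁻¹ *ᵥ fun i => x i)))

theorem stmt5 (d : ℕ) (hd : 1 ≤ d)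
    (π : EuclideanSpace ℝ (Fin d) → ℝ≥0∞) (hπ : SuperharmonicFn d π)
    (S : Matrix (Fin d) (Fin d) ℝ) (hS : S.PosDef)
    (mπ : EuclideanSpace ℝ (Fin d) → ℝ≥0∞)
    (hmπ : mπ = fun x => ∫⁻ a, ENNReal.ofReal (gaussDensityMat d S (x - a)) * π a)
    (hfin : ∀ x, mπ x ≠ ⊤) :
    SuperharmonicFn d mπ := by
  obtain ⟨hlsc, -, hmean⟩ := hπ
  have hπm : Measurable π := hlsc.measurable
  have hgc : Continuous (gaussDensityMat d S) := by
    unfold gaussDensityMat; simp only [dotProduct, mulVec]; fun_prop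
  set φ : EuclideanSpace ℝ (Fin d) → ℝ≥0∞ :=
    fun b => ENNReal.ofReal (gaussDensityMat d S b) with hφdef
  have hφm : Measurable φ := hgc.measurable.ennreal_ofReal
  have key : ∀ x, mπ x = ∫⁻ b, φ b * π (x - b) := by
    intro x
    have hf : Measurable fun b => φ b * π (x - b) :=
      hφm.mul (hπm.comp (measurable_const.sub measurable_id))
    have h := (Measure.measurePreserving_sub_left
      (volume : Measure (EuclideanSpace ℝ (Fin d))) x).lintegral_comp hf
    simp only [hmπ]
    refine Eq.trans (lintegral_congr fun a => ?_) h
    exact congrArg (fun w => φ (x - a) * π w) (sub_sub_cancel x a).symm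
  have hmlsc : LowerSemicontinuous mπ := by
    intro x y hy
    by_contra hcon
    rw [Filter.not_eventually] at hcon
    obtain ⟨u, hu, hud⟩ := Filter.exists_seq_forall_of_frequently hcon
    have hud' : ∀ n, mπ (u n) ≤ y := fun n => not_lt.mp (hud n)
    have hseq : ∀ b, π (x - b) ≤ Filter.atTop.liminf fun n => π (u n - b) := by
      intro b
      refine le_of_forall_lt fun c hc => ?_
      obtain ⟨c', hcc', hc'⟩ := exists_between hc
      have hev : ∀ᶠ n in Filter.atTop, c' < π (u n - b) :=
        (hu.sub_const b).eventually (hlsc (x - b) c' hc')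
      exact lt_of_lt_of_le hcc'
        (Filter.le_liminf_of_le (by isBoundedDefault) (hev.mono fun n h => h.le))
    have hint : mπ x ≤ Filter.atTop.liminf fun n => mπ (u n) := by
      calc mπ x = ∫⁻ b, φ b * π (x - b) := key x
        _ ≤ ∫⁻ b, Filter.atTop.liminf fun n => φ b * π (u n - b) := by
            refine lintegral_mono fun b => ?_
            calc φ b * π (x - b)
                ≤ φ b * Filter.atTop.liminf (fun n => π (u n - b)) :=
                  mul_le_mul_right (hseq b) _
              _ ≤ _ := by
                  have h := ENNReal.le_liminf_mul (f := (Filter.atTop : Filter ℕ))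
                    (u := fun _ : ℕ => φ b) (v := fun n => π (u n - b))
                  simpa [Filter.liminf_const, Pi.mul_def] using h
        _ ≤ Filter.atTop.liminf fun n => ∫⁻ b, φ b * π (u n - b) :=
            lintegral_liminf_le fun n =>
              hφm.mul (hπm.comp (measurable_const.sub measurable_id))
        _ = _ := by simp only [← key]
    have hliy : Filter.atTop.liminf (fun n => mπ (u n)) ≤
        Filter.atTop.liminf (fun _ : ℕ => y) :=
      Filter.liminf_le_liminf (Filter.Eventually.of_forall hud')
    rw [Filter.liminf_const] at hliy
    exact absurd (lt_of_lt_of_le hy (hint.trans hliy)) (lt_irrefl y)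
  refine ⟨hmlsc, ⟨0, hfin 0⟩, fun x δ hδ => ?_⟩
  set c := μH[(d : ℝ) - 1] (sphere x δ : Set (EuclideanSpace ℝ (Fin d))) with hc
  rcases eq_or_ne c 0 with h0 | h0
  · have hz : ((c⁻¹ • μH[(d : ℝ) - 1] :
        Measure (EuclideanSpace ℝ (Fin d)))).restrict (sphere x δ) = 0 := by
      rw [Measure.restrict_eq_zero]
      simp [Measure.smul_apply, ← hc, h0]
    rw [hz]
    simp
  rcases eq_or_ne c ⊤ with htop | htop
  · rw [htop]
    simp
  -- main case
  have hsm : MeasurableSet (sphere x δ : Set (EuclideanSpace ℝ (Fin d))) :=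
    isClosed_sphere.measurableSet
  set νs : Measure (EuclideanSpace ℝ (Fin d)) :=
    (c⁻¹ • μH[(d : ℝ) - 1]).restrict (sphere x δ) with hνs
  haveI : IsFiniteMeasure νs := by
    constructor
    rw [hνs, Measure.restrict_apply_univ, Measure.smul_apply, smul_eq_mul, ← hc,
      ENNReal.inv_mul_cancel h0 htop]
    exact one_lt_top
  have hmeasδ : Measurable fun p : (EuclideanSpace ℝ (Fin d)) × (EuclideanSpace ℝ (Fin d)) =>
      φ p.2 * π (p.1 - p.2) :=
    (hφm.comp measurable_snd).mul (hπm.comp (measurable_fst.sub measurable_snd))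
  have inner : ∀ b, ∫⁻ z in sphere x δ, π (z - b)
      ∂(c⁻¹ • μH[(d : ℝ) - 1] : Measure (EuclideanSpace ℝ (Fin d))) ≤ π (x - b) := by
    intro b
    have hmp : MeasurePreserving (fun z : EuclideanSpace ℝ (Fin d) => z - b)
        μH[(d : ℝ) - 1] μH[(d : ℝ) - 1] := measurePreserving_sub_right _ b
    have hpre : (fun z : EuclideanSpace ℝ (Fin d) => z - b) ⁻¹' (sphere (x - b) δ)
        = sphere x δ := by
      ext z
      simp [dist_sub_right]
    have hm2 : MeasurableSet (sphere (x - b) δ : Set (EuclideanSpace ℝ (Fin d))) :=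
      isClosed_sphere.measurableSet
    have hcb : μH[(d : ℝ) - 1] (sphere (x - b) δ : Set (EuclideanSpace ℝ (Fin d))) = c := by
      rw [hc, ← hpre]
      exact (hmp.measure_preimage hm2.nullMeasurableSet).symm
    calc ∫⁻ z in sphere x δ, π (z - b)
          ∂(c⁻¹ • μH[(d : ℝ) - 1] : Measure (EuclideanSpace ℝ (Fin d)))
        = c⁻¹ * ∫⁻ z in sphere x δ, π (z - b) ∂(μH[(d : ℝ) - 1]) := by
          rw [Measure.restrict_smul, lintegral_smul_measure, smul_eq_mul]
      _ = c⁻¹ * ∫⁻ w in sphere (x - b) δ, π w ∂(μH[(d : ℝ) - 1]) := by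
          rw [← hmp.setLIntegral_comp_preimage hm2 hπm, hpre]
      _ = ∫⁻ w in sphere (x - b) δ, π w
            ∂((μH[(d : ℝ) - 1] (sphere (x - b) δ))⁻¹ • μH[(d : ℝ) - 1]) := by
          rw [Measure.restrict_smul, lintegral_smul_measure, hcb, smul_eq_mul]
      _ ≤ π (x - b) := hmean (x - b) δ hδ
  calc ∫⁻ z in sphere x δ, mπ z
        ∂((μH[(d : ℝ) - 1] (sphere x δ))⁻¹ • μH[(d : ℝ) - 1])
      = ∫⁻ z, (∫⁻ b, φ b * π (z - b)) ∂νs := lintegral_congr fun z => key z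
    _ = ∫⁻ b, ∫⁻ z, φ b * π (z - b) ∂νs ∂volume :=
        lintegral_lintegral_swap hmeasδ.aemeasurable
    _ = ∫⁻ b, φ b * ∫⁻ z, π (z - b) ∂νs ∂volume :=
        lintegral_congr fun b =>
          lintegral_const_mul (φ b) (hπm.comp (measurable_id.sub measurable_const))
    _ ≤ ∫⁻ b, φ b * π (x - b) ∂volume :=
        lintegral_mono fun b => mul_le_mul_right (inner b) _
    _ = mπ x := (key x).symm
end
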